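/- Let ξ = (1−pq)ν + pq·ξ₂ and ξ' = (1−pq)ν + pq·ξ₁ where ν = c₁ξ₀ + c₂ξ₁. Then for α = e^ε, α' = e^{ε'} with ε = log(1+pq(e^{ε'}−1)) and β = e^{ε−ε'}, the advanced joint convexity identity gives D_α(ξ||ξ') = pq·D_{α'}(ξ₂ || (1−β)(c₁ξ₀ + c₂ξ₁) + βξ₁), and by joint convexity this is at most pq(1−β)c₁ D_{α'}(ξ₂||ξ₀) + pq((1−β)c₂ + β) D_{α'}(ξ₂||ξ₁). -/

import Mathlib

open MeasureTheory

/-- For `ξ = (1−pq)ν + pq·ξ₂` and `ξ' = (1−pq)ν + pq·ξ₁` with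
`ν = c₁ξ₀ + c₂ξ₁` (densities `f₀, f₁, f₂` of the probability measures
`ξ₀, ξ₁, ξ₂` w.r.t. a common dominating measure `μ₀`), `α = e^ε`, `α' = e^{ε'}`,
`ε = log(1 + pq(e^{ε'} − 1))` and `β = e^{ε−ε'}`, advanced joint convexity gives
`D_α(ξ‖ξ') = pq·D_{α'}(ξ₂ ‖ (1−β)(c₁ξ₀ + c₂ξ₁) + βξ₁)`, and by joint convexity
this is at most
`pq(1−β)c₁ D_{α'}(ξ₂‖ξ₀) + pq((1−β)c₂ + β) D_{α'}(ξ₂‖ξ₁)`. -/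
theorem ajc_and_convexity_bound {Ω : Type*} [MeasurableSpace Ω] (μ₀ : Measure Ω)
    (f₀ f₁ f₂ : Ω → ℝ) (p q ε ε' α α' β c₁ c₂ : ℝ)
    (hp : p ∈ Set.Ioc (0:ℝ) 1) (hq : q ∈ Set.Ioc (0:ℝ) 1) (hpq : p * q < 1)
    (hε' : 0 ≤ ε') (hε : ε = Real.log (1 + p * q * (Real.exp ε' - 1)))
    (hα : α = Real.exp ε) (hα' : α' = Real.exp ε') (hβ : β = Real.exp (ε - ε'))
    (hc₁ : c₁ = (1 - p) / (1 - p * q)) (hc₂ : c₂ = p * (1 - q) / (1 - p * q))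
    (hf₀m : Measurable f₀) (hf₁m : Measurable f₁) (hf₂m : Measurable f₂)
    (hf₀0 : ∀ z, 0 ≤ f₀ z) (hf₁0 : ∀ z, 0 ≤ f₁ z) (hf₂0 : ∀ z, 0 ≤ f₂ z)
    (hf₀1 : ∫ z, f₀ z ∂μ₀ = 1) (hf₁1 : ∫ z, f₁ z ∂μ₀ = 1)
    (hf₂1 : ∫ z, f₂ z ∂μ₀ = 1)
    (hi₀ : Integrable (fun z => max 0 (f₂ z - α' * f₀ z)) μ₀)
    (hi₁ : Integrable (fun z => max 0 (f₂ z - α' * f₁ z)) μ₀)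
    (himix : Integrable (fun z =>
      max 0 (f₂ z - α' * ((1 - β) * (c₁ * f₀ z + c₂ * f₁ z) + β * f₁ z))) μ₀) :
    (∫ z, max 0 (((1 - p * q) * (c₁ * f₀ z + c₂ * f₁ z) + p * q * f₂ z) -
          α * ((1 - p * q) * (c₁ * f₀ z + c₂ * f₁ z) + p * q * f₁ z)) ∂μ₀ =
        p * q * ∫ z, max 0 (f₂ z -
          α' * ((1 - β) * (c₁ * f₀ z + c₂ * f₁ z) + β * f₁ z)) ∂μ₀) ∧
      p * q * (∫ z, max 0 (f₂ z -
          α' * ((1 - β) * (c₁ * f₀ z + c₂ * f₁ z) + β * f₁ z)) ∂μ₀) ≤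
        p * q * (1 - β) * c₁ * (∫ z, max 0 (f₂ z - α' * f₀ z) ∂μ₀) +
          p * q * ((1 - β) * c₂ + β) * ∫ z, max 0 (f₂ z - α' * f₁ z) ∂μ₀ := by
  obtain ⟨hp0, hp1⟩ := hp
  obtain ⟨hq0, hq1⟩ := hq
  have hpq0 : 0 < p * q := mul_pos hp0 hq0
  have hpq1 : (0:ℝ) < 1 - p * q := by linarith
  have hα'1 : 1 ≤ α' := hα' ▸ Real.one_le_exp hε'
  have hpos : 0 < 1 + p * q * (Real.exp ε' - 1) := by
    have : 0 ≤ p * q * (Real.exp ε' - 1) := by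
      have := Real.one_le_exp hε'
      nlinarith
    linarith
  have hA : α = 1 + p * q * (α' - 1) := by
    rw [hα, hε, Real.exp_log hpos, hα']
  have hB : α = α' * β := by
    rw [hα, hα', hβ, ← Real.exp_add]
    ring_nf
  have hβ0 : 0 < β := hβ ▸ Real.exp_pos _
  have hβ1 : β ≤ 1 := by
    rw [hβ]
    apply Real.exp_le_one_iff.mpr
    have hεle : ε ≤ ε' := by
      have hle : 1 + p * q * (Real.exp ε' - 1) ≤ Real.exp ε' := by
        nlinarith [Real.one_le_exp hε']
      calc ε = Real.log (1 + p * q * (Real.exp ε' - 1)) := hε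
        _ ≤ Real.log (Real.exp ε') := Real.log_le_log hpos hle
        _ = ε' := Real.log_exp _
    linarith
  have hc₁0 : 0 ≤ c₁ := by
    rw [hc₁]; exact div_nonneg (by linarith) hpq1.le
  have hc₂0 : 0 ≤ c₂ := by
    rw [hc₂]
    apply div_nonneg _ hpq1.le
    nlinarith
  have hcsum : c₁ + c₂ = 1 := by
    rw [hc₁, hc₂, ← add_div, div_eq_one_iff_eq hpq1.ne']
    ring
  constructor
  · have h1 : (fun z => max 0 (((1 - p * q) * (c₁ * f₀ z + c₂ * f₁ z) + p * q * f₂ z) -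
          α * ((1 - p * q) * (c₁ * f₀ z + c₂ * f₁ z) + p * q * f₁ z)))
        = fun z => p * q * max 0 (f₂ z -
          α' * ((1 - β) * (c₁ * f₀ z + c₂ * f₁ z) + β * f₁ z)) := by
      funext z
      rw [mul_max_of_nonneg _ _ hpq0.le, mul_zero]
      congr 1
      linear_combination (-((c₁ * f₀ z + c₂ * f₁ z))) * hA + (-(p * q * f₁ z) + p * q * (c₁ * f₀ z + c₂ * f₁ z)) * hB
    rw [h1, integral_const_mul]
  · set a : ℝ := (1 - β) * c₁ with ha
    set b : ℝ := (1 - β) * c₂ + β with hb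
    have ha0 : 0 ≤ a := mul_nonneg (by linarith) hc₁0
    have hb0 : 0 ≤ b := by
      have : 0 ≤ (1 - β) * c₂ := mul_nonneg (by linarith) hc₂0
      linarith
    have hI : (∫ z, max 0 (f₂ z -
          α' * ((1 - β) * (c₁ * f₀ z + c₂ * f₁ z) + β * f₁ z)) ∂μ₀) ≤
        a * (∫ z, max 0 (f₂ z - α' * f₀ z) ∂μ₀) +
          b * ∫ z, max 0 (f₂ z - α' * f₁ z) ∂μ₀ := by
      rw [← integral_const_mul, ← integral_const_mul, ← integral_add
        (hi₀.const_mul a) (hi₁.const_mul b)]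
      apply integral_mono himix ((hi₀.const_mul a).add (hi₁.const_mul b))
      intro z
      have hab : a + b = 1 := by
        have : (1 - β) * (c₁ + c₂) + β = 1 := by rw [hcsum]; ring
        rw [ha, hb]; linarith [this]
      have hx : f₂ z - α' * ((1 - β) * (c₁ * f₀ z + c₂ * f₁ z) + β * f₁ z)
          = a * (f₂ z - α' * f₀ z) + b * (f₂ z - α' * f₁ z) := by
        rw [ha, hb]
        linear_combination (-(1 - β) * f₂ z) * hcsum
      dsimp only [Pi.add_apply]
      rw [hx]
      refine max_le ?_ ?_
      · have h0 : 0 ≤ a * max 0 (f₂ z - α' * f₀ z) :=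
          mul_nonneg ha0 (le_max_left _ _)
        have h1 : 0 ≤ b * max 0 (f₂ z - α' * f₁ z) :=
          mul_nonneg hb0 (le_max_left _ _)
        linarith
      · exact add_le_add
          (mul_le_mul_of_nonneg_left (le_max_right _ _) ha0)
          (mul_le_mul_of_nonneg_left (le_max_right _ _) hb0)
    calc p * q * (∫ z, max 0 (f₂ z -
          α' * ((1 - β) * (c₁ * f₀ z + c₂ * f₁ z) + β * f₁ z)) ∂μ₀)
        ≤ p * q * (a * (∫ z, max 0 (f₂ z - α' * f₀ z) ∂μ₀) +
          b * ∫ z, max 0 (f₂ z - α' * f₁ z) ∂μ₀) :=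
          mul_le_mul_of_nonneg_left hI hpq0.le
      _ = p * q * (1 - β) * c₁ * (∫ z, max 0 (f₂ z - α' * f₀ z) ∂μ₀) +
          p * q * ((1 - β) * c₂ + β) * ∫ z, max 0 (f₂ z - α' * f₁ z) ∂μ₀ := by
          rw [ha, hb]; ring
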